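/- Let X be a 2-Segal simplicial set. Regard a 1-simplex b ∈ X_1 as an edge from ∂_1 b to ∂_0 b, and for b, b', b'' ∈ X_1 set C_{b b'}^{b''} = {c ∈ X_2 : ∂_0 c = b, ∂_2 c = b', ∂_1 c = b''}. Let u, v, w, p ∈ X_1 satisfy ∂_1 u = ∂_0 v, ∂_0 w = ∂_1 v, ∂_1 p = ∂_1 w, ∂_0 p = ∂_0 u (so that, writing x = ∂_1 v, y = ∂_0 v, z = ∂_0 u, t = ∂_1 w, one has w : t → x, v : x → y, u : y → z, p : t → z). Then there is a bijection between the disjoint union over all r ∈ X_1 with ∂_1 r = x and ∂_0 r = z of the sets C_{u v}^{r} × C_{r w}^{p}, and the disjoint union over all s ∈ X_1 with ∂_1 s = t and ∂_0 s = y of the sets C_{u s}^{p} × C_{v w}^{s}. -/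

import Mathlib

open CategoryTheory Simplicial

universe u

namespace Seg

/-- Restriction of a simplex along a monotone map of standard simplices. -/
def res (X : SSet.{u}) {m n : ℕ} (f : Fin (m + 1) →o Fin (n + 1)) : X _⦋n⦌ → X _⦋m⦌ :=
  X.map (SimplexCategory.mkHom f).op

/-- The monotone injection `[l] → [n]`, `k ↦ i + k`, i.e. the inclusion of the
interval `{i, i+1, …, i+l}` into `{0, …, n}`. -/
def interval {n : ℕ} (i l : ℕ) (h : i + l ≤ n) : Fin (l + 1) →o Fin (n + 1) where
  toFun k := ⟨i + k.1, by have := k.isLt; omega⟩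
  monotone' := by
    intro a b hab
    have h' : a.1 ≤ b.1 := hab
    simp only [Fin.mk_le_mk]
    omega

/-- The monotone injection with image `{0,…,i} ∪ {j,…,n}` (where `i < j ≤ n`). -/
def outer {n : ℕ} (i j : ℕ) (hij : i < j) (hj : j ≤ n) :
    Fin (n - (j - i) + 2) →o Fin (n + 1) where
  toFun k := ⟨if k.1 ≤ i then k.1 else k.1 + (j - i) - 1, by have := k.isLt; split <;> omega⟩
  monotone' := by
    intro a b hab
    have h' : a.1 ≤ b.1 := hab
    have ha := a.isLt
    have hb := b.isLt
    simp only [Fin.mk_le_mk]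
    split_ifs <;> omega

/-- The monotone map `[1] → [l]` sending `0 ↦ 0` and `1 ↦ l`. -/
def ends (l : ℕ) : Fin 2 →o Fin (l + 1) where
  toFun k := ⟨k.1 * l, by
    have hk : k.1 ≤ 1 := Nat.lt_succ_iff.mp k.isLt
    have h2 : k.1 * l ≤ 1 * l := Nat.mul_le_mul hk (le_refl l)
    omega⟩
  monotone' := by
    intro a b hab
    have h' : a.1 ≤ b.1 := hab
    simp only [Fin.mk_le_mk]
    exact Nat.mul_le_mul h' (le_refl l)

/-- The map `[0] → [n]` picking out the vertex `i`. -/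
def vert {n : ℕ} (i : ℕ) (h : i ≤ n) : Fin 1 →o Fin (n + 1) where
  toFun _ := ⟨i, by omega⟩
  monotone' := fun _ _ _ => le_refl _

/-- The monotone surjection `[m+1] → [m]` hitting `i` twice; restriction along it is the
degeneracy `s_i : X_m → X_{m+1}`. -/
def degen {m : ℕ} (i : ℕ) (h : i ≤ m) : Fin (m + 2) →o Fin (m + 1) where
  toFun k := ⟨if k.1 ≤ i then k.1 else k.1 - 1, by have := k.isLt; split <;> omega⟩
  monotone' := by
    intro a b hab
    have h' : a.1 ≤ b.1 := hab
    simp only [Fin.mk_le_mk]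
    split_ifs <;> omega

/-- The 2-Segal map associated to `0 ≤ i < j ≤ n`, i.e. the canonical map
`X_n → X_{{0,…,i}∪{j,…,n}} ×_{X_{{i,j}}} X_{{i,…,j}}`, is a bijection.  (A map into a
fiber product of sets is a bijection iff every compatible pair has a unique preimage.) -/
def TwoSegalMapBij (X : SSet.{u}) (n i j : ℕ) (hij : i < j) (hj : j ≤ n) : Prop :=
  ∀ (a : X _⦋n - (j - i) + 1⦌) (b : X _⦋j - i⦌),
    res X (interval i 1 (by omega)) a = res X (ends (j - i)) b →
    ∃! x : X _⦋n⦌,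
      res X (outer i j hij hj) x = a ∧ res X (interval i (j - i) (by omega)) x = b

/-- A simplicial set is 2-Segal if all the 2-Segal maps are bijections. -/
def IsTwoSegal (X : SSet.{u}) : Prop :=
  ∀ (n i j : ℕ), 3 ≤ n → ∀ (hij : i < j) (hj : j ≤ n), TwoSegalMapBij X n i j hij hj

/-- A simplicial set is Segal (1-Segal) if for each `n ≥ 2` the map
`X_n → X_1 ×_{X_0} ⋯ ×_{X_0} X_1` (restriction to the edges `{k,k+1}`) is a bijection. -/
def IsSegal (X : SSet.{u}) : Prop :=
  ∀ (n : ℕ), 2 ≤ n → ∀ e : Fin n → X _⦋1⦌,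
    (∀ (k : ℕ) (hk : k + 1 < n),
      res X (vert 1 (le_refl 1)) (e ⟨k, by omega⟩) =
        res X (vert 0 (Nat.zero_le 1)) (e ⟨k + 1, hk⟩)) →
    ∃! x : X _⦋n⦌, ∀ k : Fin n, res X (interval k.1 1 (by have := k.isLt; omega)) x = e k

end Seg

namespace Seg

/-- The face `∂₀ : X₂ → X₁` (restriction to the edge `{1,2}`). -/
def d2_0 (X : SSet.{u}) : X _⦋2⦌ → X _⦋1⦌ := res X (interval 1 1 (by omega))
/-- The face `∂₁ : X₂ → X₁` (restriction to the edge `{0,2}`). -/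
def d2_1 (X : SSet.{u}) : X _⦋2⦌ → X _⦋1⦌ := res X (ends 2)
/-- The face `∂₂ : X₂ → X₁` (restriction to the edge `{0,1}`). -/
def d2_2 (X : SSet.{u}) : X _⦋2⦌ → X _⦋1⦌ := res X (interval 0 1 (by omega))
/-- The face `∂₀ : X₁ → X₀` (restriction to the vertex `{1}`). -/
def d1_0 (X : SSet.{u}) : X _⦋1⦌ → X _⦋0⦌ := res X (vert 1 (le_refl 1))
/-- The face `∂₁ : X₁ → X₀` (restriction to the vertex `{0}`). -/
def d1_1 (X : SSet.{u}) : X _⦋1⦌ → X _⦋0⦌ := res X (vert 0 (Nat.zero_le 1))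
/-- The degeneracy `s₀ : X₀ → X₁`. -/
def s0 (X : SSet.{u}) : X _⦋0⦌ → X _⦋1⦌ := res X (degen 0 (le_refl 0))

/-- The set `C_{b b'}^{b''}` of triangles with `∂₀ = b`, `∂₂ = b'`, `∂₁ = b''`. -/
def Cset (X : SSet.{u}) (b b' b'' : X _⦋1⦌) : Type u :=
  {c : X.obj (Opposite.op (SimplexCategory.mk 2)) //
    d2_0 X c = b ∧ d2_2 X c = b' ∧ d2_1 X c = b''}

end Seg

namespace Seg

lemma res_res (X : SSet.{u}) {a b c : ℕ} (f : Fin (a+1) →o Fin (b+1))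
    (g : Fin (b+1) →o Fin (c+1)) (x : X _⦋c⦌) :
    res X f (res X g x) = res X (g.comp f) x := by
  simp only [res]
  rw [← FunctorToTypes.map_comp_apply]
  rfl

lemma res_congr (X : SSet.{u}) {m n : ℕ} {f g : Fin (m+1) →o Fin (n+1)}
    (h : ∀ k, f k = g k) (x : X _⦋n⦌) : res X f x = res X g x := by
  have hfg : f = g := OrderHom.ext _ _ (funext h)
  rw [hfg]

lemma res_res_eq (X : SSet.{u}) {a b c : ℕ} (f : Fin (a+1) →o Fin (b+1))
    (g : Fin (b+1) →o Fin (c+1)) (e : Fin (a+1) →o Fin (c+1))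
    (h : ∀ k, g (f k) = e k) (x : X _⦋c⦌) :
    res X f (res X g x) = res X e x := by
  rw [res_res]; exact res_congr X h x

/-! Named edge/face inclusions. -/

abbrev V0 : Fin 1 →o Fin 2 := vert (n := 1) 0 (by omega)
abbrev V1 : Fin 1 →o Fin 2 := vert (n := 1) 1 (by omega)
abbrev i01 : Fin 2 →o Fin 3 := interval (n := 2) 0 1 (by omega)
abbrev i11 : Fin 2 →o Fin 3 := interval (n := 2) 1 1 (by omega)
abbrev e2 : Fin 2 →o Fin 3 := ends 2
abbrev J01 : Fin 2 →o Fin 4 := interval (n := 3) 0 1 (by omega)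
abbrev J11 : Fin 2 →o Fin 4 := interval (n := 3) 1 1 (by omega)
abbrev J21 : Fin 2 →o Fin 4 := interval (n := 3) 2 1 (by omega)
abbrev E3 : Fin 2 →o Fin 4 := ends 3
abbrev I12 : Fin 3 →o Fin 4 := interval (n := 3) 1 2 (by omega)
abbrev I02 : Fin 3 →o Fin 4 := interval (n := 3) 0 2 (by omega)
abbrev O13 : Fin 3 →o Fin 4 := outer (n := 3) 1 3 (by omega) (by omega)
abbrev O02 : Fin 3 →o Fin 4 := outer (n := 3) 0 2 (by omega) (by omega)
abbrev E13 : Fin 2 →o Fin 4 := O13.comp i11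
abbrev E02 : Fin 2 →o Fin 4 := O02.comp i01
abbrev C0 : Fin 1 →o Fin 3 := e2.comp V0
abbrev C2 : Fin 1 →o Fin 3 := e2.comp V1

/-- vertex 0 of a triangle, two ways -/
lemma vtx0 (X : SSet.{u}) (c : X _⦋2⦌) : d1_1 X (d2_1 X c) = d1_1 X (d2_2 X c) := by
  show res X V0 (res X e2 c) = res X V0 (res X i01 c)
  rw [res_res_eq X V0 e2 C0 (by decide) c, res_res_eq X V0 i01 C0 (by decide) c]

/-- vertex 2 of a triangle, two ways -/
lemma vtx2 (X : SSet.{u}) (c : X _⦋2⦌) : d1_0 X (d2_1 X c) = d1_0 X (d2_0 X c) := by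
  show res X V1 (res X e2 c) = res X V1 (res X i11 c)
  rw [res_res_eq X V1 e2 C2 (by decide) c, res_res_eq X V1 i11 C2 (by decide) c]

/-- The set of 3-simplices with prescribed boundary edges `{2,3} = u`, `{1,2} = v`,
`{0,1} = w`, `{0,3} = p`. -/
def Tset (X : SSet.{u}) (u v w p : X _⦋1⦌) : Type u :=
  {x : X.obj (Opposite.op (SimplexCategory.mk 3)) //
    res X J21 x = u ∧ res X J11 x = v ∧ res X J01 x = w ∧ res X E3 x = p}

/-- Flattened version of the left-hand side. -/
def Lset' (X : SSet.{u}) (u v w p : X _⦋1⦌) : Type u :=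
  {q : X.obj (Opposite.op (SimplexCategory.mk 2)) × X.obj (Opposite.op (SimplexCategory.mk 2)) //
    d2_0 X q.1 = u ∧ d2_2 X q.1 = v ∧ d2_2 X q.2 = w ∧ d2_1 X q.2 = p ∧
    d2_0 X q.2 = d2_1 X q.1}

/-- Flattened version of the right-hand side. -/
def Rset' (X : SSet.{u}) (u v w p : X _⦋1⦌) : Type u :=
  {q : X.obj (Opposite.op (SimplexCategory.mk 2)) × X.obj (Opposite.op (SimplexCategory.mk 2)) //
    d2_0 X q.1 = u ∧ d2_1 X q.1 = p ∧ d2_2 X q.2 = w ∧ d2_0 X q.2 = v ∧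
    d2_2 X q.1 = d2_1 X q.2}

lemma Tset_equiv_Lset' (X : SSet.{u}) (hX : IsTwoSegal X) (u v w p : X _⦋1⦌) :
    Nonempty (Tset X u v w p ≃ Lset' X u v w p) := by
  have hseg := hX 3 1 3 (by omega) (by omega) (by omega)
  set θ : Tset X u v w p → Lset' X u v w p := fun x =>
    ⟨(res X I12 x.1, res X O13 x.1),
      by
        obtain ⟨x, hu, hv, hw, hp⟩ := x
        refine ⟨?_, ?_, ?_, ?_, ?_⟩
        · show res X i11 (res X I12 x) = u
          rw [res_res_eq X i11 I12 J21 (by decide) x]; exact hu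
        · show res X i01 (res X I12 x) = v
          rw [res_res_eq X i01 I12 J11 (by decide) x]; exact hv
        · show res X i01 (res X O13 x) = w
          rw [res_res_eq X i01 O13 J01 (by decide) x]; exact hw
        · show res X e2 (res X O13 x) = p
          rw [res_res_eq X e2 O13 E3 (by decide) x]; exact hp
        · show res X i11 (res X O13 x) = res X e2 (res X I12 x)
          rw [res_res_eq X i11 O13 E13 (by decide) x,
            res_res_eq X e2 I12 E13 (by decide) x]⟩
  have hbij : Function.Bijective θ := by
    constructor
    · intro x y hxy
      have hval := congrArg Subtype.val hxy
      have hb : res X I12 x.1 = res X I12 y.1 := congrArg Prod.fst hval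
      have ha : res X O13 x.1 = res X O13 y.1 := congrArg Prod.snd hval
      have compat : res X i11 (res X O13 x.1) = res X e2 (res X I12 x.1) := by
        rw [res_res_eq X i11 O13 E13 (by decide) x.1,
          res_res_eq X e2 I12 E13 (by decide) x.1]
      obtain ⟨x0, -, huniq⟩ := hseg (res X O13 x.1) (res X I12 x.1) compat
      have h1 := huniq x.1 ⟨rfl, rfl⟩
      have h2 := huniq y.1 ⟨ha.symm, hb.symm⟩
      exact Subtype.ext (h1.trans h2.symm)
    · rintro ⟨⟨b, a⟩, hbu, hbv, haw, hap, hglue⟩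
      have compat : res X i11 a = res X e2 b := hglue
      obtain ⟨x0, ⟨hxa0, hxb0⟩, -⟩ := hseg a b compat
      have hxa : res X O13 x0 = a := hxa0
      have hxb : res X I12 x0 = b := hxb0
      refine ⟨⟨x0, ?_, ?_, ?_, ?_⟩, ?_⟩
      · rw [← res_res_eq X i11 I12 J21 (by decide) x0, hxb]; exact hbu
      · rw [← res_res_eq X i01 I12 J11 (by decide) x0, hxb]; exact hbv
      · rw [← res_res_eq X i01 O13 J01 (by decide) x0, hxa]; exact haw
      · rw [← res_res_eq X e2 O13 E3 (by decide) x0, hxa]; exact hap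
      · exact Subtype.ext (Prod.ext hxb hxa)
  exact ⟨Equiv.ofBijective θ hbij⟩

lemma Tset_equiv_Rset' (X : SSet.{u}) (hX : IsTwoSegal X) (u v w p : X _⦋1⦌) :
    Nonempty (Tset X u v w p ≃ Rset' X u v w p) := by
  have hseg := hX 3 0 2 (by omega) (by omega) (by omega)
  set θ : Tset X u v w p → Rset' X u v w p := fun x =>
    ⟨(res X O02 x.1, res X I02 x.1),
      by
        obtain ⟨x, hu, hv, hw, hp⟩ := x
        refine ⟨?_, ?_, ?_, ?_, ?_⟩
        · show res X i11 (res X O02 x) = u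
          rw [res_res_eq X i11 O02 J21 (by decide) x]; exact hu
        · show res X e2 (res X O02 x) = p
          rw [res_res_eq X e2 O02 E3 (by decide) x]; exact hp
        · show res X i01 (res X I02 x) = w
          rw [res_res_eq X i01 I02 J01 (by decide) x]; exact hw
        · show res X i11 (res X I02 x) = v
          rw [res_res_eq X i11 I02 J11 (by decide) x]; exact hv
        · show res X i01 (res X O02 x) = res X e2 (res X I02 x)
          rw [res_res_eq X i01 O02 E02 (by decide) x,
            res_res_eq X e2 I02 E02 (by decide) x]⟩
  have hbij : Function.Bijective θ := by
    constructor
    · intro x y hxy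
      have hval := congrArg Subtype.val hxy
      have ha : res X O02 x.1 = res X O02 y.1 := congrArg Prod.fst hval
      have hb : res X I02 x.1 = res X I02 y.1 := congrArg Prod.snd hval
      have compat : res X i01 (res X O02 x.1) = res X e2 (res X I02 x.1) := by
        rw [res_res_eq X i01 O02 E02 (by decide) x.1,
          res_res_eq X e2 I02 E02 (by decide) x.1]
      obtain ⟨x0, -, huniq⟩ := hseg (res X O02 x.1) (res X I02 x.1) compat
      have h1 := huniq x.1 ⟨rfl, rfl⟩
      have h2 := huniq y.1 ⟨ha.symm, hb.symm⟩
      exact Subtype.ext (h1.trans h2.symm)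
    · rintro ⟨⟨a, b⟩, hau, hap, hbw, hbv, hglue⟩
      have compat : res X i01 a = res X e2 b := hglue
      obtain ⟨x0, ⟨hxa0, hxb0⟩, -⟩ := hseg a b compat
      have hxa : res X O02 x0 = a := hxa0
      have hxb : res X I02 x0 = b := hxb0
      refine ⟨⟨x0, ?_, ?_, ?_, ?_⟩, ?_⟩
      · rw [← res_res_eq X i11 O02 J21 (by decide) x0, hxa]; exact hau
      · rw [← res_res_eq X i11 I02 J11 (by decide) x0, hxb]; exact hbv
      · rw [← res_res_eq X i01 I02 J01 (by decide) x0, hxb]; exact hbw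
      · rw [← res_res_eq X e2 O02 E3 (by decide) x0, hxa]; exact hap
      · exact Subtype.ext (Prod.ext hxa hxb)
  exact ⟨Equiv.ofBijective θ hbij⟩

lemma Lsig_equiv_Lset' (X : SSet.{u}) (u v w p : X _⦋1⦌) :
    Nonempty ((Σ r : {r : X _⦋1⦌ // d1_1 X r = d1_1 X v ∧ d1_0 X r = d1_0 X u},
        Cset X u v r.1 × Cset X r.1 w p) ≃ Lset' X u v w p) := by
  set F : (Σ r : {r : X _⦋1⦌ // d1_1 X r = d1_1 X v ∧ d1_0 X r = d1_0 X u},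
      Cset X u v r.1 × Cset X r.1 w p) → Lset' X u v w p := fun q =>
    ⟨(q.2.1.1, q.2.2.1),
      q.2.1.2.1, q.2.1.2.2.1, q.2.2.2.2.1, q.2.2.2.2.2,
      by rw [q.2.2.2.1, q.2.1.2.2.2]⟩
  have hbij : Function.Bijective F := by
    constructor
    · rintro ⟨⟨r, hr⟩, c1, c2⟩ ⟨⟨r', hr'⟩, c1', c2'⟩ h
      have hval := congrArg Subtype.val h
      have h1 : c1.1 = c1'.1 := congrArg Prod.fst hval
      have h2 : c2.1 = c2'.1 := congrArg Prod.snd hval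
      have hcr : d2_1 X c1.1 = r := c1.2.2.2
      have hcr' : d2_1 X c1'.1 = r' := c1'.2.2.2
      have hrr : r = r' := by rw [← hcr, ← hcr', h1]
      subst hrr
      have e1 : c1 = c1' := Subtype.ext h1
      have e2' : c2 = c2' := Subtype.ext h2
      subst e1; subst e2'
      rfl
    · rintro ⟨⟨c1, c2⟩, hc1u, hc1v, hc2w, hc2p, hglue⟩
      exact ⟨⟨⟨d2_1 X c1, by rw [vtx0 X c1, hc1v], by rw [vtx2 X c1, hc1u]⟩,
        ⟨c1, hc1u, hc1v, rfl⟩, ⟨c2, hglue, hc2w, hc2p⟩⟩, rfl⟩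
  exact ⟨Equiv.ofBijective F hbij⟩

lemma Rsig_equiv_Rset' (X : SSet.{u}) (u v w p : X _⦋1⦌) :
    Nonempty ((Σ s : {s : X _⦋1⦌ // d1_1 X s = d1_1 X w ∧ d1_0 X s = d1_0 X v},
        Cset X u s.1 p × Cset X v w s.1) ≃ Rset' X u v w p) := by
  set F : (Σ s : {s : X _⦋1⦌ // d1_1 X s = d1_1 X w ∧ d1_0 X s = d1_0 X v},
      Cset X u s.1 p × Cset X v w s.1) → Rset' X u v w p := fun q =>
    ⟨(q.2.1.1, q.2.2.1),
      q.2.1.2.1, q.2.1.2.2.2, q.2.2.2.2.1, q.2.2.2.1,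
      by rw [q.2.1.2.2.1, q.2.2.2.2.2]⟩
  have hbij : Function.Bijective F := by
    constructor
    · rintro ⟨⟨s, hs⟩, c1, c2⟩ ⟨⟨s', hs'⟩, c1', c2'⟩ h
      have hval := congrArg Subtype.val h
      have h1 : c1.1 = c1'.1 := congrArg Prod.fst hval
      have h2 : c2.1 = c2'.1 := congrArg Prod.snd hval
      have hcs : d2_1 X c2.1 = s := c2.2.2.2
      have hcs' : d2_1 X c2'.1 = s' := c2'.2.2.2
      have hss : s = s' := by rw [← hcs, ← hcs', h2]
      subst hss
      have e1 : c1 = c1' := Subtype.ext h1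
      have e2' : c2 = c2' := Subtype.ext h2
      subst e1; subst e2'
      rfl
    · rintro ⟨⟨c1, c2⟩, hc1u, hc1p, hc2w, hc2v, hglue⟩
      exact ⟨⟨⟨d2_1 X c2, by rw [vtx0 X c2, hc2w], by rw [vtx2 X c2, hc2v]⟩,
        ⟨c1, hc1u, hglue, hc1p⟩, ⟨c2, hc2v, hc2w, rfl⟩⟩, rfl⟩
  exact ⟨Equiv.ofBijective F hbij⟩

/-- For a 2-Segal simplicial set, the associator bijection between the two ways of
decomposing triangles: `⨿_r C_{uv}^r × C_{rw}^p ≃ ⨿_s C_{us}^p × C_{vw}^s`. -/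
theorem assoc_bijection (X : SSet.{u}) (hX : IsTwoSegal X) (u v w p : X _⦋1⦌)
    (h1 : d1_1 X u = d1_0 X v) (h2 : d1_0 X w = d1_1 X v)
    (h3 : d1_1 X p = d1_1 X w) (h4 : d1_0 X p = d1_0 X u) :
    Nonempty
      ((Σ r : {r : X _⦋1⦌ // d1_1 X r = d1_1 X v ∧ d1_0 X r = d1_0 X u},
          Cset X u v r.1 × Cset X r.1 w p) ≃
       (Σ s : {s : X _⦋1⦌ // d1_1 X s = d1_1 X w ∧ d1_0 X s = d1_0 X v},
          Cset X u s.1 p × Cset X v w s.1)) := by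
  obtain ⟨eL⟩ := Tset_equiv_Lset' X hX u v w p
  obtain ⟨eR⟩ := Tset_equiv_Rset' X hX u v w p
  obtain ⟨gL⟩ := Lsig_equiv_Lset' X u v w p
  obtain ⟨gR⟩ := Rsig_equiv_Rset' X u v w p
  exact ⟨(gL.trans eL.symm).trans (eR.trans gR.symm)⟩

end Seg
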